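/- Let m ≥ 1, let ε > 0, and let X be a finite set of points of the Euclidean space ℝ^m. If the intersection ⋂_{x∈X} B(x,ε) of the open Euclidean balls of radius ε centered at the points of X is nonempty, then the convex hull of X is contained in the open ε-neighborhood U(X,ε) := ⋃_{x∈X} B(x,ε). (Lemma 5.1 of the paper.) -/

import Mathlib

/-- Lemma 5.1.  Let `m ≥ 1`, `ε > 0`, and let `X` be a finite set of
points of `ℝ^m`.  If the intersection of the open balls `B(x, ε)` for `x ∈ X` is nonempty,
then the convex hull of `X` is contained in the open `ε`-neighborhood
`U(X, ε) = ⋃ x ∈ X, B(x, ε)`. -/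
theorem convexHull_subset_union_balls
    (m : ℕ) (hm : 1 ≤ m) (ε : ℝ) (hε : 0 < ε)
    (X : Set (EuclideanSpace ℝ (Fin m))) (hX : X.Finite)
    (h : (⋂ x ∈ X, Metric.ball x ε).Nonempty) :
    convexHull ℝ X ⊆ ⋃ x ∈ X, Metric.ball x ε := by
  obtain ⟨p, hp⟩ := h
  simp only [Set.mem_iInter, Metric.mem_ball] at hp
  intro y hy
  rw [mem_convexHull_iff_exists_fintype] at hy
  obtain ⟨ι, _, w, z, hw₀, hw₁, hz, hx⟩ := hy
  by_contra hc
  simp only [Set.mem_iUnion, Metric.mem_ball, not_exists] at hc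
  push_neg at hc
  have key : ∀ i, w i * (‖p‖^2 - 2 * inner ℝ p (z i)) ≤ w i * (‖y‖^2 - 2 * inner ℝ y (z i)) ∧
      (0 < w i → w i * (‖p‖^2 - 2 * inner ℝ p (z i)) < w i * (‖y‖^2 - 2 * inner ℝ y (z i))) := by
    intro i
    have h1 : dist p (z i) < dist y (z i) := (hp _ (hz i)).trans_le (hc _ (hz i))
    have h2 : 0 ≤ dist p (z i) := dist_nonneg
    have e1 : dist p (z i) ^ 2 = ‖p‖^2 - 2 * inner ℝ p (z i) + ‖z i‖^2 := by
      rw [dist_eq_norm, @norm_sub_sq_real]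
    have e2 : dist y (z i) ^ 2 = ‖y‖^2 - 2 * inner ℝ y (z i) + ‖z i‖^2 := by
      rw [dist_eq_norm, @norm_sub_sq_real]
    have hlt : ‖p‖^2 - 2 * inner ℝ p (z i) < ‖y‖^2 - 2 * inner ℝ y (z i) := by nlinarith
    exact ⟨mul_le_mul_of_nonneg_left hlt.le (hw₀ i),
      fun hwi => mul_lt_mul_of_pos_left hlt hwi⟩
  obtain ⟨i₀, hi₀⟩ : ∃ i, 0 < w i := by
    by_contra hno
    push_neg at hno
    have : (∑ i, w i) ≤ 0 := Finset.sum_nonpos fun i _ => hno i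
    linarith [hw₁ ▸ this]
  have hsum : ∑ i, w i * (‖p‖^2 - 2 * inner ℝ p (z i)) <
      ∑ i, w i * (‖y‖^2 - 2 * inner ℝ y (z i)) :=
    Finset.sum_lt_sum (fun i _ => (key i).1) ⟨i₀, Finset.mem_univ i₀, (key i₀).2 hi₀⟩
  have expand : ∀ v : EuclideanSpace ℝ (Fin m),
      ∑ i, w i * (‖v‖^2 - 2 * inner ℝ v (z i)) = ‖v‖^2 - 2 * inner ℝ v y := by
    intro v
    have : (inner ℝ v y : ℝ) = ∑ i, w i * inner ℝ v (z i) := by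
      rw [← hx, inner_sum]
      exact Finset.sum_congr rfl fun i _ => real_inner_smul_right v (z i) (w i)
    rw [this]
    rw [Finset.mul_sum]
    rw [show ∑ i, w i * (‖v‖^2 - 2 * inner ℝ v (z i))
        = ∑ i, (w i * ‖v‖^2 - 2 * (w i * inner ℝ v (z i))) from
      Finset.sum_congr rfl fun i _ => by ring]
    rw [Finset.sum_sub_distrib, ← Finset.sum_mul, hw₁, one_mul, ← Finset.mul_sum]
  rw [expand p, expand y] at hsum
  nlinarith [sq_nonneg (‖p - y‖), norm_sub_sq_real p y, real_inner_self_eq_norm_sq y,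
    real_inner_comm p y]
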